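/- Let (X, d) be a geodesic metric space, (Z, d_Z) a metric space, k ∈ ℕ, and suppose Φ : X → ℝ^k × Z is an isometry onto its image (with a product metric on ℝ^k × Z) whose image is open in ℝ^k × Z. Write Φ = (u, f). If the Hausdorff dimension of X is at most k, then f is constant on each geodesic-connected subset of X; in particular if X is geodesic then f is constant. -/

import Mathlib

open Metric MeasureTheory
open scoped ENNReal

/-- Let `Φ = (u, f) : X → ℝ^k × Z` be an isometry onto its image (with the product metric),
with open image. If `X` is geodesic and has Hausdorff dimension at most `k`, then the
`Z`-component `f` is constant. -/
theorem z_component_constant {X Z : Type*} [MetricSpace X] [MetricSpace Z]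
    [MeasurableSpace X] [BorelSpace X]
    (hgeo : ∀ a b : X, ∃ γ : ℝ → X, γ 0 = a ∧ γ (dist a b) = b ∧
      ∀ s ∈ Set.Icc (0 : ℝ) (dist a b), ∀ t ∈ Set.Icc (0 : ℝ) (dist a b),
        dist (γ s) (γ t) = |s - t|)
    (k : ℕ) (Φ : X → EuclideanSpace ℝ (Fin k) × Z)
    (hΦ : Isometry Φ) (hopen : IsOpen (Set.range Φ))
    (hdim : dimH (Set.univ : Set X) ≤ k) :
    ∀ a b : X, (Φ a).2 = (Φ b).2 := by
  intro a b
  by_contra hne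
  obtain ⟨γ, hγ0, hγL, hγd⟩ := hgeo a b
  set L := dist a b with hLdef
  have hab : a ≠ b := fun h => hne (by rw [h])
  have hL0 : 0 < L := dist_pos.mpr hab
  set F : ℝ → EuclideanSpace ℝ (Fin k) × Z := fun t => Φ (γ t) with hF
  have hFd : ∀ s ∈ Set.Icc (0:ℝ) L, ∀ t ∈ Set.Icc (0:ℝ) L,
      dist (F s) (F t) = |s - t| := by
    intro s hs t ht
    simpa [hF, hΦ.dist_eq] using hγd s hs t ht
  have hFcont : ContinuousOn F (Set.Icc 0 L) := by
    refine LipschitzOnWith.continuousOn (K := 1) ?_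
    refine LipschitzOnWith.of_dist_le_mul fun s hs t ht => ?_
    rw [hFd s hs t ht, Real.dist_eq, NNReal.coe_one, one_mul]
  -- compact image and uniform thickening inside the open range
  have hK : IsCompact (F '' Set.Icc 0 L) := isCompact_Icc.image_of_continuousOn hFcont
  have hKsub : F '' Set.Icc 0 L ⊆ Set.range Φ := by
    rintro _ ⟨t, _, rfl⟩; exact ⟨γ t, rfl⟩
  obtain ⟨ε, hε0, hthick⟩ := hK.exists_thickening_subset_open hopen hKsub
  -- choose a fine partition
  obtain ⟨n, hn⟩ := exists_nat_gt (L / (ε / 4))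
  have hn0 : 0 < (n : ℝ) := lt_trans (div_pos hL0 (by linarith)) hn
  set δ := L / n with hδ
  have hδ0 : 0 < δ := div_pos hL0 hn0
  have hδε : δ < ε / 4 := by
    rw [hδ, div_lt_iff₀ hn0]
    calc L < (n : ℝ) * (ε / 4) := (div_lt_iff₀ (by linarith)).1 hn
    _ = ε / 4 * n := mul_comm _ _
  set u : ℕ → ℝ := fun i => i * δ with hu
  have humem : ∀ i : ℕ, i ≤ n → u i ∈ Set.Icc (0:ℝ) L := by
    intro i hi
    constructor
    · positivity
    · have : (i : ℝ) * δ ≤ n * δ := by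
        apply mul_le_mul_of_nonneg_right _ hδ0.le
        exact_mod_cast hi
      calc u i ≤ n * δ := this
      _ = L := by rw [hδ]; field_simp [hn0.ne']
  have hun : u n = L := by simp only [hu, hδ]; field_simp [hn0.ne']
  -- find a short subinterval where the Z-component changes
  have key : ∃ i : ℕ, i < n ∧ (F (u i)).2 ≠ (F (u (i+1))).2 := by
    by_contra h
    push_neg at h
    have hall : ∀ i : ℕ, i ≤ n → (F (u i)).2 = (F (u 0)).2 := by
      intro i hi
      induction i with
      | zero => rfl
      | succ i ih => rw [← h i (by omega), ih (by omega)]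
    have h0 : F (u 0) = Φ a := by simp [hF, hu, hγ0]
    have hL' : F (u n) = Φ b := by rw [hun]; simp [hF, hγL]
    exact hne (by rw [← h0, ← hL', hall n le_rfl])
  obtain ⟨i, hi, hciz⟩ := key
  set t₀ := u i with ht₀
  set t₁ := u (i+1) with ht₁
  have ht01 : t₁ - t₀ = δ := by
    simp only [ht₀, ht₁, hu]; push_cast; ring
  have ht0mem : t₀ ∈ Set.Icc (0:ℝ) L := humem i (by omega)
  have ht1mem : t₁ ∈ Set.Icc (0:ℝ) L := humem (i+1) (by omega)
  have ht0le : t₀ ≤ t₁ := by nlinarith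
  set x₀ := (F t₀).1 with hx₀
  set z₀ := (F t₀).2 with hz₀
  set r := dist z₀ (F t₁).2 with hr
  have hr0 : 0 < r := dist_pos.mpr hciz
  have hsnd_le : ∀ p q : EuclideanSpace ℝ (Fin k) × Z, dist p.2 q.2 ≤ dist p q := by
    intro p q
    rw [Prod.dist_eq]
    exact le_max_right _ _
  have hrδ : r ≤ δ := by
    calc r ≤ dist (F t₀) (F t₁) := hsnd_le _ _
    _ = |t₀ - t₁| := hFd t₀ ht0mem t₁ ht1mem
    _ = δ := by rw [abs_sub_comm, abs_of_nonneg (by linarith [ht01])]; linarith [ht01]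
  -- the ball around F t₀ is inside the range
  have hball : ball (F t₀) ε ⊆ Set.range Φ :=
    (ball_subset_thickening (Set.mem_image_of_mem F ht0mem) ε).trans hthick
  -- IVT for the distance function
  set φ : ℝ → ℝ := fun t => dist z₀ (F t).2 with hφ
  have hφcont : ContinuousOn φ (Set.Icc t₀ t₁) := by
    apply Continuous.comp_continuousOn (continuous_const.dist continuous_id)
    exact continuous_snd.comp_continuousOn
      (hFcont.mono (Set.Icc_subset_Icc ht0mem.1 ht1mem.2))
  have hIVT : Set.Icc (0:ℝ) r ⊆ φ '' Set.Icc t₀ t₁ := by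
    have := intermediate_value_Icc ht0le hφcont
    simpa [hφ, hz₀, hr] using this
  -- the Lipschitz projection
  set g : EuclideanSpace ℝ (Fin k) × Z → EuclideanSpace ℝ (Fin k) × ℝ :=
    fun p => (p.1, dist z₀ p.2) with hg
  have hgl : LipschitzWith 1 g := by
    have h2 : LipschitzWith 1 (fun p : EuclideanSpace ℝ (Fin k) × Z => dist z₀ p.2) := by
      convert (LipschitzWith.dist_right z₀).comp
        (LipschitzWith.prod_snd (α := EuclideanSpace ℝ (Fin k)) (β := Z)) using 1
      · simp
      · funext p; rfl
    simpa using (LipschitzWith.prod_fst.prodMk h2 : LipschitzWith (max 1 1) g)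
  -- the product set inside the image
  set S : Set (EuclideanSpace ℝ (Fin k) × ℝ) := ball x₀ (ε/2) ×ˢ Set.Icc (0:ℝ) r with hS
  have hSsub : S ⊆ g '' Set.range Φ := by
    rintro ⟨x, ρ⟩ ⟨hx, hρ⟩
    obtain ⟨t, ht, hφt⟩ := hIVT hρ
    have hmem : (x, (F t).2) ∈ Set.range Φ := by
      apply hball
      rw [mem_ball, Prod.dist_eq, max_lt_iff]
      constructor
      · calc dist x x₀ < ε/2 := hx
        _ < ε := by linarith
      · calc dist (F t).2 (F t₀).2 = φ t := by rw [hφ, hz₀, dist_comm]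
        _ = ρ := hφt
        _ ≤ r := hρ.2
        _ ≤ δ := hrδ
        _ < ε := by linarith
    refine ⟨(x, (F t).2), hmem, ?_⟩
    simp only [hg]
    exact Prod.ext rfl hφt
  -- dimension computation
  have hdimS : dimH S = (k + 1 : ℕ) := by
    have hmemnhds : S ∈ nhds ((x₀, r/2) : EuclideanSpace ℝ (Fin k) × ℝ) := by
      have hO : IsOpen (ball x₀ (ε/2) ×ˢ Set.Ioo (0:ℝ) r) := isOpen_ball.prod isOpen_Ioo
      refine Filter.mem_of_superset
        (hO.mem_nhds ⟨mem_ball_self (by linarith), half_pos hr0, half_lt_self hr0⟩) ?_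
      exact Set.prod_mono subset_rfl Set.Ioo_subset_Icc_self
    rw [Real.dimH_of_mem_nhds hmemnhds]
    norm_num [Module.finrank_prod, finrank_euclideanSpace_fin]
  have hle : dimH S ≤ (k : ℝ≥0∞) := by
    calc dimH S ≤ dimH (g '' Set.range Φ) := dimH_mono hSsub
    _ ≤ dimH (Set.range Φ) := hgl.dimH_image_le _
    _ = dimH (Set.univ : Set X) := by rw [← Set.image_univ, hΦ.dimH_image]
    _ ≤ k := hdim
  rw [hdimS] at hle
  exact absurd (Nat.cast_le.mp hle) (by omega)
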